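/- Let G be a simple graph on a finite vertex type V, let u,v be distinct vertices, and let G' be the graph obtained from G by adding the edge {u,v}. Fix r ∈ ℕ. Then: (i) every vertex a whose r-ball in G differs from its r-ball in G' satisfies dist_{G'}(a,u) ≤ r or dist_{G'}(a,v) ≤ r; and (ii) if moreover every vertex of G' has degree at most d, then the set of vertices a with N_r^G(a) ≠ N_r^{G'}(a) has cardinality at most 2·∑_{i=0}^{r} d^i. -/

import Mathlib

/-- `distLE G r a b` : there is a walk in `G` from `a` to `b` of length at most `r`. -/
def distLE {V : Type*} (G : SimpleGraph V) (r : ℕ) (a b : V) : Prop :=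
  ∃ w : G.Walk a b, w.length ≤ r

/-- The `r`-ball around a vertex `a`. -/
def ball {V : Type*} (G : SimpleGraph V) (r : ℕ) (a : V) : Set V :=
  {b | distLE G r a b}

private lemma ncard_biUnion_le' {α β : Type*} [Fintype β] (s : Finset α) (f : α → Set β) :
    (⋃ x ∈ s, f x).ncard ≤ ∑ x ∈ s, (f x).ncard := by
  classical
  induction s using Finset.induction with
  | empty => simp
  | insert _ _ hx ih =>
    rename_i a s
    rw [Finset.sum_insert hx]
    have : (⋃ x ∈ insert a s, f x) = f a ∪ ⋃ x ∈ s, f x := by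
      simp [Set.biUnion_insert]
    rw [this]
    exact le_trans (Set.ncard_union_le _ _) (Nat.add_le_add_left ih _)

private lemma ball_card_le {V : Type*} [Fintype V] (H : SimpleGraph V) (d : ℕ)
    (hd : ∀ x : V, (H.neighborSet x).ncard ≤ d) (r : ℕ) (u : V) :
    {a : V | distLE H r u a}.ncard ≤ ∑ i ∈ Finset.range (r + 1), d ^ i := by
  classical
  induction r generalizing u with
  | zero =>
    have hsub : {a : V | distLE H 0 u a} ⊆ {u} := by
      rintro a ⟨w, hw⟩
      have : w.length = 0 := Nat.le_zero.mp hw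
      have := w.eq_of_length_eq_zero this
      simp [this]
    calc {a : V | distLE H 0 u a}.ncard ≤ ({u} : Set V).ncard :=
          Set.ncard_le_ncard hsub (Set.toFinite _)
      _ = 1 := Set.ncard_singleton u
      _ ≤ _ := by simp
  | succ r ih =>
    set T := (Set.toFinite (H.neighborSet u)).toFinset with hT
    have hsub : {a : V | distLE H (r + 1) u a} ⊆
        {u} ∪ ⋃ x ∈ T, {a : V | distLE H r x a} := by
      rintro a ⟨w, hw⟩
      cases w with
      | nil => left; rfl
      | cons h p =>
        right
        rename_i c
        have hc : c ∈ (T : Set V) := by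
          simp only [hT, Finset.coe_sort_coe, Finset.mem_coe, Set.Finite.mem_toFinset]
          exact h
        exact Set.mem_biUnion hc ⟨p, by simpa using Nat.le_of_succ_le_succ (by simpa using hw)⟩
    have hTcard : T.card ≤ d := by
      rw [hT, ← Set.ncard_eq_toFinset_card]
      exact hd u
    calc {a : V | distLE H (r + 1) u a}.ncard
        ≤ ({u} ∪ ⋃ x ∈ T, {a : V | distLE H r x a}).ncard :=
          Set.ncard_le_ncard hsub (Set.toFinite _)
      _ ≤ ({u} : Set V).ncard + (⋃ x ∈ T, {a : V | distLE H r x a}).ncard :=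
          Set.ncard_union_le _ _
      _ ≤ 1 + ∑ x ∈ T, {a : V | distLE H r x a}.ncard := by
          have := ncard_biUnion_le' T (fun x => {a : V | distLE H r x a})
          simpa using Nat.add_le_add_left this 1
      _ ≤ 1 + ∑ x ∈ T, ∑ i ∈ Finset.range (r + 1), d ^ i := by
          exact Nat.add_le_add_left (Finset.sum_le_sum fun x _ => ih x) 1
      _ = 1 + T.card * ∑ i ∈ Finset.range (r + 1), d ^ i := by
          rw [Finset.sum_const, smul_eq_mul]
      _ ≤ 1 + d * ∑ i ∈ Finset.range (r + 1), d ^ i :=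
          Nat.add_le_add_left (Nat.mul_le_mul_right _ hTcard) 1
      _ = ∑ i ∈ Finset.range (r + 2), d ^ i := by
          have h2 : ∑ i ∈ Finset.range (r + 2), d ^ i
              = (∑ i ∈ Finset.range (r + 1), d ^ (i + 1)) + 1 := by
            simpa using Finset.sum_range_succ' (fun i => d ^ i) (r + 1)
          rw [h2, Nat.add_comm]
          congr 1
          rw [Finset.mul_sum]
          exact Finset.sum_congr rfl fun i _ => (pow_succ' d i).symm

theorem stmt_1 {V : Type*} [Fintype V] (G : SimpleGraph V) (u v : V) (huv : u ≠ v)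
    (G' : SimpleGraph V) (hG' : G' = G ⊔ SimpleGraph.fromEdgeSet {s(u, v)})
    (r : ℕ) :
    (∀ a : V, ball G r a ≠ ball G' r a → distLE G' r a u ∨ distLE G' r a v) ∧
    (∀ d : ℕ, (∀ x : V, (G'.neighborSet x).ncard ≤ d) →
      {a : V | ball G r a ≠ ball G' r a}.ncard ≤ 2 * ∑ i ∈ Finset.range (r + 1), d ^ i) := by
  classical
  have hle : G ≤ G' := by rw [hG']; exact le_sup_left
  -- key walk decomposition lemma
  have key : ∀ (a b : V) (w : G'.Walk a b),
      (∃ w' : G.Walk a b, w'.length ≤ w.length) ∨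
      (∃ p : G'.Walk a u, p.length ≤ w.length) ∨
      (∃ p : G'.Walk a v, p.length ≤ w.length) := by
    intro a b w
    induction w with
    | nil => exact Or.inl ⟨SimpleGraph.Walk.nil, le_rfl⟩
    | cons h p ih =>
      rename_i a c b
      have hadj : G.Adj a c ∨ (s(a, c) = s(u, v)) := by
        rw [hG'] at h
        rcases h with h | h
        · exact Or.inl h
        · exact Or.inr h.1
      rcases hadj with h' | h'
      · rcases ih with ⟨w', hw'⟩ | ⟨q, hq⟩ | ⟨q, hq⟩
        · exact Or.inl ⟨SimpleGraph.Walk.cons h' w', by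
            simpa using Nat.succ_le_succ hw'⟩
        · exact Or.inr (Or.inl ⟨SimpleGraph.Walk.cons h q, by
            simpa using Nat.succ_le_succ hq⟩)
        · exact Or.inr (Or.inr ⟨SimpleGraph.Walk.cons h q, by
            simpa using Nat.succ_le_succ hq⟩)
      · rw [Sym2.eq_iff] at h'
        rcases h' with ⟨hau, _⟩ | ⟨hav, _⟩
        · subst hau
          exact Or.inr (Or.inl ⟨SimpleGraph.Walk.nil, Nat.zero_le _⟩)
        · subst hav
          exact Or.inr (Or.inr ⟨SimpleGraph.Walk.nil, Nat.zero_le _⟩)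
  have part1 : ∀ a : V, ball G r a ≠ ball G' r a → distLE G' r a u ∨ distLE G' r a v := by
    intro a hne
    have hsub : ball G r a ⊆ ball G' r a := by
      rintro b ⟨w, hw⟩
      exact ⟨w.mapLe hle, by simpa using hw⟩
    have : ∃ b, b ∈ ball G' r a ∧ b ∉ ball G r a := by
      by_contra hc
      push_neg at hc
      exact hne (Set.Subset.antisymm hsub hc)
    obtain ⟨b, ⟨w, hw⟩, hbn⟩ := this
    rcases key a b w with ⟨w', hw'⟩ | ⟨q, hq⟩ | ⟨q, hq⟩
    · exact absurd ⟨w', le_trans hw' hw⟩ hbn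
    · exact Or.inl ⟨q, le_trans hq hw⟩
    · exact Or.inr ⟨q, le_trans hq hw⟩
  refine ⟨part1, ?_⟩
  intro d hd
  have hsub : {a : V | ball G r a ≠ ball G' r a} ⊆
      {a : V | distLE G' r u a} ∪ {a : V | distLE G' r v a} := by
    intro a ha
    rcases part1 a ha with ⟨w, hw⟩ | ⟨w, hw⟩
    · exact Or.inl ⟨w.reverse, by simpa using hw⟩
    · exact Or.inr ⟨w.reverse, by simpa using hw⟩
  calc {a : V | ball G r a ≠ ball G' r a}.ncard
      ≤ ({a : V | distLE G' r u a} ∪ {a : V | distLE G' r v a}).ncard :=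
        Set.ncard_le_ncard hsub (Set.toFinite _)
    _ ≤ {a : V | distLE G' r u a}.ncard + {a : V | distLE G' r v a}.ncard :=
        Set.ncard_union_le _ _
    _ ≤ (∑ i ∈ Finset.range (r + 1), d ^ i) + ∑ i ∈ Finset.range (r + 1), d ^ i :=
        Nat.add_le_add (ball_card_le G' d hd r u) (ball_card_le G' d hd r v)
    _ = 2 * ∑ i ∈ Finset.range (r + 1), d ^ i := by ring
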